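/- Let X ⊂ A^{2n} (n ≥ 3) be the rank ≤ 1 locus of 2×n matrices (the cone over the Segre embedding P^1 × P^{n−1} ⊂ P^{2n−1}). Then X_m is irreducible for every m ≥ 1, even though X is not a complete intersection. -/

import Mathlib

noncomputable section

/-- The universal substitution `U_i ↦ ∑_j X_{i,j} t^j` computing the equations of jet schemes:
a polynomial `f` in the variables `σ` is sent to a polynomial in `t` whose coefficients are the
equations of the jet scheme of `V(f)`. -/
def jetSub (k : Type*) [CommRing k] (σ : Type*) (m : ℕ) :
    MvPolynomial σ k →ₐ[k] Polynomial (MvPolynomial (σ × Fin (m + 1)) k) :=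
  MvPolynomial.aeval fun i =>
    ∑ j : Fin (m + 1), Polynomial.C (MvPolynomial.X (i, j)) * Polynomial.X ^ (j : ℕ)

/-- The ideal of the `m`-th jet scheme of the closed subscheme of affine space `Spec k[σ]`
defined by the equations in `F`: it is generated by the coefficients of `t^l`, `0 ≤ l ≤ m`,
of the universal substitutions of the elements of `F`. -/
def jetIdeal (k : Type*) [CommRing k] (σ : Type*) (m : ℕ)
    (F : Set (MvPolynomial σ k)) : Ideal (MvPolynomial (σ × Fin (m + 1)) k) :=
  Ideal.span {g | ∃ f ∈ F, ∃ l ≤ m, g = Polynomial.coeff (jetSub k σ m f) l}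

/-- The ideal of the fiber `π_m⁻¹(x)` of the `m`-th jet scheme over the point `x`. -/
def jetFiberIdeal (k : Type*) [CommRing k] (σ : Type*) (m : ℕ)
    (F : Set (MvPolynomial σ k)) (x : σ → k) : Ideal (MvPolynomial (σ × Fin (m + 1)) k) :=
  jetIdeal k σ m F ⊔
    Ideal.span (Set.range fun i : σ =>
      MvPolynomial.X (i, (0 : Fin (m + 1))) - MvPolynomial.C (x i))

/-- The ideal of the locus `π_m⁻¹(Z)` of `m`-jets lying over the closed subscheme `Z = V(G)`. -/
def jetOverIdeal (k : Type*) [CommRing k] (σ : Type*) (m : ℕ)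
    (F G : Set (MvPolynomial σ k)) : Ideal (MvPolynomial (σ × Fin (m + 1)) k) :=
  jetIdeal k σ m F ⊔
    Ideal.span ((MvPolynomial.rename fun i : σ => (i, (0 : Fin (m + 1)))) '' G)

/-- The Zariski tangent space at a point `x` of the subvariety of affine space cut out by the
equations `F`, namely the common kernel of the differentials at `x`. -/
def tangentSpaceAt (k : Type*) [Field k] {σ : Type*} [Fintype σ]
    (F : Set (MvPolynomial σ k)) (x : σ → k) : Submodule k (σ → k) :=
  ⨅ f ∈ F, LinearMap.ker (∑ i : σ,
    MvPolynomial.eval x (MvPolynomial.pderiv i f) •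
      (LinearMap.proj i : (σ → k) →ₗ[k] k))


/-- The `2 × 2` minors `U_i V_j − U_j V_i` of the generic `2 × n` matrix, cutting out the cone
over the Segre embedding of `ℙ¹ × ℙ^{n-1}` in `𝔸^{2n}`. -/
def segreMinors (k : Type*) [CommRing k] (n : ℕ) : Set (MvPolynomial (Fin 2 × Fin n) k) :=
  {g | ∃ i j : Fin n,
    g = MvPolynomial.X ((0 : Fin 2), i) * MvPolynomial.X ((1 : Fin 2), j) -
        MvPolynomial.X ((0 : Fin 2), j) * MvPolynomial.X ((1 : Fin 2), i)}

namespace S13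
open MvPolynomial PowerSeries

open MvPolynomial PowerSeries

section CommRingPart
variable {k : Type*} [CommRing k] {σ : Type*} {n : ℕ}

def tser (m : ℕ) (c : Fin (m+1) → k) : PowerSeries k :=
  ∑ l : Fin (m+1), PowerSeries.C (c l) * PowerSeries.X ^ (l : ℕ)

lemma coeff_tser (m : ℕ) (c : Fin (m+1) → k) (l : ℕ) :
    PowerSeries.coeff l (tser m c) = if h : l < m+1 then c ⟨l, h⟩ else 0 := by
  simp only [tser, map_sum, PowerSeries.coeff_C_mul, PowerSeries.coeff_X_pow]
  split
  · rename_i h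
    rw [Finset.sum_eq_single (⟨l, h⟩ : Fin (m+1))]
    · simp
    · intro j _ hj
      rw [if_neg, mul_zero]
      intro he; apply hj; exact Fin.ext he.symm
    · simp
  · rename_i h
    apply Finset.sum_eq_zero
    intro j _
    rw [if_neg, mul_zero]
    intro he; exact h (he ▸ j.isLt)

lemma coeff_tser_fin (m : ℕ) (c : Fin (m+1) → k) (l : Fin (m+1)) :
    PowerSeries.coeff (l : ℕ) (tser m c) = c l := by
  rw [coeff_tser, dif_pos l.isLt]

def psOf (m : ℕ) (p : σ × Fin (m+1) → k) (i : σ) : PowerSeries k :=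
  tser m fun l => p (i, l)

lemma eval_coeff_jetSub (m : ℕ) (p : σ × Fin (m+1) → k) (f : MvPolynomial σ k) (l : ℕ) :
    MvPolynomial.eval p (Polynomial.coeff (jetSub k σ m f) l)
      = PowerSeries.coeff l (MvPolynomial.aeval (psOf m p) f) := by
  have key : ((Polynomial.coeToPowerSeries.algHom k).comp
      ((Polynomial.mapAlgHom (MvPolynomial.aeval p)).comp (jetSub k σ m)))
      = MvPolynomial.aeval (psOf m p) := by
    apply MvPolynomial.algHom_ext
    intro i
    simp [jetSub, psOf, tser, Polynomial.coeToPowerSeries.algHom_apply,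
      Polynomial.map_sum, Polynomial.coe_C, Polynomial.coe_X]
  have := congrArg (fun q => PowerSeries.coeff l q) (congrArg (fun F => F f) key)
  simp only [AlgHom.comp_apply, Polynomial.coeToPowerSeries.algHom_apply] at this
  rw [← this]
  simp [Polynomial.coeff_coe, Polynomial.coeff_map, MvPolynomial.coe_aeval_eq_eval]

lemma map_tser {R S : Type*} [CommRing R] [CommRing S] (f : R →+* S) (m : ℕ)
    (c : Fin (m+1) → R) :
    PowerSeries.map f (tser m c) = tser m (fun l => f (c l)) := by
  unfold tser
  rw [map_sum]
  refine Finset.sum_congr rfl fun l _ => ?_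
  rw [map_mul, map_pow, PowerSeries.map_C, PowerSeries.map_X]

end CommRingPart

variable {k : Type*} [Field k] {σ : Type*} {n : ℕ}

/-- coefficients below m+1 agree if difference is divisible by X^(m+1) -/
lemma coeff_eq_of_dvd {m : ℕ} {x y : PowerSeries k}
    (h : (PowerSeries.X : PowerSeries k) ^ (m+1) ∣ x - y) {l : ℕ} (hl : l ≤ m) :
    PowerSeries.coeff l x = PowerSeries.coeff l y := by
  have := (PowerSeries.X_pow_dvd_iff.mp h) l (by omega)
  rw [map_sub, sub_eq_zero] at this
  exact this

lemma mul_congr {m : ℕ} {x x' y y' : PowerSeries k}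
    (hx : (PowerSeries.X : PowerSeries k) ^ (m+1) ∣ x - x')
    (hy : (PowerSeries.X : PowerSeries k) ^ (m+1) ∣ y - y') :
    (PowerSeries.X : PowerSeries k) ^ (m+1) ∣ x * y - x' * y' := by
  have : x * y - x' * y' = (x - x') * y + x' * (y - y') := by ring
  rw [this]
  exact dvd_add (hx.mul_right y) (hy.mul_left x')

/-- the jet point attached to two vectors of power series -/
def jpt (m : ℕ) (U V : Fin n → PowerSeries k) : (Fin 2 × Fin n) × Fin (m+1) → k :=
  fun x => PowerSeries.coeff (x.2 : ℕ) (if x.1.1 = 0 then U x.1.2 else V x.1.2)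

lemma psOf_jpt_row0 (m : ℕ) (U V : Fin n → PowerSeries k) (i : Fin n) (l : ℕ) (hl : l ≤ m) :
    PowerSeries.coeff l (psOf m (jpt m U V) ((0 : Fin 2), i)) = PowerSeries.coeff l (U i) := by
  rw [psOf, coeff_tser, dif_pos (by omega : l < m+1)]
  simp [jpt]

lemma psOf_jpt_row1 (m : ℕ) (U V : Fin n → PowerSeries k) (i : Fin n) (l : ℕ) (hl : l ≤ m) :
    PowerSeries.coeff l (psOf m (jpt m U V) ((1 : Fin 2), i)) = PowerSeries.coeff l (V i) := by
  rw [psOf, coeff_tser, dif_pos (by omega : l < m+1)]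
  simp [jpt]

lemma dvd_sub_psOf_jpt_row0 (m : ℕ) (U V : Fin n → PowerSeries k) (i : Fin n) :
    (PowerSeries.X : PowerSeries k) ^ (m+1) ∣ psOf m (jpt m U V) ((0 : Fin 2), i) - U i := by
  rw [PowerSeries.X_pow_dvd_iff]
  intro l hl
  rw [map_sub, sub_eq_zero]
  exact psOf_jpt_row0 m U V i l (by omega)

lemma dvd_sub_psOf_jpt_row1 (m : ℕ) (U V : Fin n → PowerSeries k) (i : Fin n) :
    (PowerSeries.X : PowerSeries k) ^ (m+1) ∣ psOf m (jpt m U V) ((1 : Fin 2), i) - V i := by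
  rw [PowerSeries.X_pow_dvd_iff]
  intro l hl
  rw [map_sub, sub_eq_zero]
  exact psOf_jpt_row1 m U V i l (by omega)

lemma jpt_psOf (m : ℕ) (p : (Fin 2 × Fin n) × Fin (m+1) → k) :
    jpt m (fun i => psOf m p ((0 : Fin 2), i)) (fun i => psOf m p ((1 : Fin 2), i)) = p := by
  funext x
  obtain ⟨⟨r, i⟩, l⟩ := x
  unfold jpt
  fin_cases r
  · simp [psOf, coeff_tser_fin]
  · simp only [if_neg (by decide : ¬ ((1 : Fin 2) = 0))]
    simp [psOf, coeff_tser_fin]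

/-- membership in the zero locus of the jet ideal, in terms of power series -/
lemma mem_zl_iff (m : ℕ) (p : (Fin 2 × Fin n) × Fin (m+1) → k) :
    p ∈ MvPolynomial.zeroLocus k (jetIdeal k (Fin 2 × Fin n) m (segreMinors k n)) ↔
    ∀ i j : Fin n, ∀ l ≤ m, PowerSeries.coeff l
      (psOf m p ((0:Fin 2), i) * psOf m p ((1:Fin 2), j)
        - psOf m p ((0:Fin 2), j) * psOf m p ((1:Fin 2), i)) = 0 := by
  constructor
  · intro hp i j l hl
    have hgen : (Polynomial.coeff (jetSub k (Fin 2 × Fin n) m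
        (MvPolynomial.X ((0 : Fin 2), i) * MvPolynomial.X ((1 : Fin 2), j) -
         MvPolynomial.X ((0 : Fin 2), j) * MvPolynomial.X ((1 : Fin 2), i))) l)
        ∈ jetIdeal k (Fin 2 × Fin n) m (segreMinors k n) := by
      apply Ideal.subset_span
      exact ⟨_, ⟨i, j, rfl⟩, l, hl, rfl⟩
    have := hp _ hgen
    rw [(show ∀ y, MvPolynomial.aeval p y = MvPolynomial.eval p y from fun _ => rfl),
        eval_coeff_jetSub] at this
    simpa [map_sub, map_mul] using this
  · intro h
    intro q hq
    have hle : jetIdeal k (Fin 2 × Fin n) m (segreMinors k n) ≤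
        MvPolynomial.vanishingIdeal k {p} := by
      rw [jetIdeal, Ideal.span_le]
      rintro g ⟨f, ⟨i, j, rfl⟩, l, hl, rfl⟩
      rw [SetLike.mem_coe, MvPolynomial.mem_vanishingIdeal_singleton_iff,
        (show ∀ y, MvPolynomial.aeval p y = MvPolynomial.eval p y from fun _ => rfl),
        eval_coeff_jetSub]
      simpa [map_sub, map_mul] using h i j l hl
    exact (MvPolynomial.mem_vanishingIdeal_singleton_iff p q).mp (hle hq)

/-- rank one jets are in the zero locus -/
lemma wpt_mem_zl (m : ℕ) (A B : PowerSeries k) (w : Fin n → PowerSeries k) :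
    jpt m (fun i => A * w i) (fun i => B * w i)
      ∈ MvPolynomial.zeroLocus k (jetIdeal k (Fin 2 × Fin n) m (segreMinors k n)) := by
  rw [mem_zl_iff]
  intro i j l hl
  set U : Fin n → PowerSeries k := fun i => A * w i
  set V : Fin n → PowerSeries k := fun i => B * w i
  have h1 := mul_congr (dvd_sub_psOf_jpt_row0 m U V i) (dvd_sub_psOf_jpt_row1 m U V j)
  have h2 := mul_congr (dvd_sub_psOf_jpt_row0 m U V j) (dvd_sub_psOf_jpt_row1 m U V i)
  have h3 := dvd_sub h1 h2
  have he : U i * V j - U j * V i = 0 := by simp only [U, V]; ring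
  have : (PowerSeries.X : PowerSeries k) ^ (m+1) ∣
      (psOf m (jpt m U V) ((0:Fin 2), i) * psOf m (jpt m U V) ((1:Fin 2), j)
        - psOf m (jpt m U V) ((0:Fin 2), j) * psOf m (jpt m U V) ((1:Fin 2), i)) - 0 := by
    rw [sub_zero]
    have heq : psOf m (jpt m U V) ((0:Fin 2), i) * psOf m (jpt m U V) ((1:Fin 2), j)
        - psOf m (jpt m U V) ((0:Fin 2), j) * psOf m (jpt m U V) ((1:Fin 2), i)
        = (psOf m (jpt m U V) ((0:Fin 2), i) * psOf m (jpt m U V) ((1:Fin 2), j) - U i * V j)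
          - (psOf m (jpt m U V) ((0:Fin 2), j) * psOf m (jpt m U V) ((1:Fin 2), i) - U j * V i) := by
      linear_combination he
    rw [heq]
    exact dvd_sub h1 h2
  have := coeff_eq_of_dvd this hl
  simpa using this


open MvPolynomial PowerSeries

variable {k : Type*} [Field k] {n : ℕ}

lemma core2 {m : ℕ} (U V : Fin n → PowerSeries k)
    (hm : ∀ i j, (PowerSeries.X : PowerSeries k)^(m+1) ∣ U i * V j - U j * V i)
    (a : ℕ) (ham : a ≤ m)
    (ha : ∃ i, PowerSeries.coeff a (U i) ≠ 0)
    (hUlow : ∀ i, ∀ l < a, PowerSeries.coeff l (U i) = 0)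
    (hVlow : ∀ i, ∀ l < a, PowerSeries.coeff l (V i) = 0) :
    ∃ D : Fin n → PowerSeries k, ∀ s : k, s ≠ 0 →
      ∃ (A B : PowerSeries k) (w : Fin n → PowerSeries k), ∀ i : Fin n, ∀ l ≤ m,
        PowerSeries.coeff l (A * w i) = PowerSeries.coeff l (U i) ∧
        PowerSeries.coeff l (B * w i) = PowerSeries.coeff l (V i)
          + s * PowerSeries.coeff l (D i) := by
  obtain ⟨i0, hc⟩ := ha
  have hdU : ∀ i, (PowerSeries.X : PowerSeries k)^a ∣ U i := fun i =>
    PowerSeries.X_pow_dvd_iff.mpr (fun l hl => hUlow i l hl)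
  choose U' hU' using hdU
  have hdV0 : (PowerSeries.X : PowerSeries k)^a ∣ V i0 :=
    PowerSeries.X_pow_dvd_iff.mpr (fun l hl => hVlow i0 l hl)
  set u : PowerSeries k := U' i0 with hu
  have hcu : PowerSeries.coeff a (U i0) = PowerSeries.constantCoeff u := by
    rw [hU' i0]
    have := PowerSeries.coeff_X_pow_mul u a 0
    simpa using this
  have hcu' : PowerSeries.constantCoeff u ≠ 0 := by rw [← hcu]; exact hc
  set cu : kˣ := Units.mk0 _ hcu'
  set uinv : PowerSeries k := PowerSeries.invOfUnit u cu with huinv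
  have hui : u * uinv = 1 := PowerSeries.mul_invOfUnit u cu rfl
  set lam : PowerSeries k := V i0 * uinv with hlam
  have hlamd : (PowerSeries.X : PowerSeries k)^a ∣ lam := hdV0.mul_right uinv
  have key : ∀ i, ∃ E, V i - lam * U' i = (PowerSeries.X : PowerSeries k)^(m+1-a) * E := by
    intro i
    have h1 := hm i0 i
    obtain ⟨z, hz⟩ := h1
    have h2 : (PowerSeries.X : PowerSeries k)^a * (u * (V i - lam * U' i))
        = U i0 * V i - U i * V i0 := by
      rw [hlam]
      linear_combination (-(V i)) * hU' i0 + (V i0) * hU' i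
        + (-((PowerSeries.X : PowerSeries k)^a * U' i * V i0)) * hui
    have hz' : (PowerSeries.X : PowerSeries k)^a * (u * (V i - lam * U' i))
        = (PowerSeries.X : PowerSeries k)^a * ((PowerSeries.X : PowerSeries k)^(m+1-a) * z) := by
      rw [h2, hz, ← mul_assoc, ← pow_add]
      congr 2
      omega
    have hcan : u * (V i - lam * U' i) = (PowerSeries.X : PowerSeries k)^(m+1-a) * z :=
      mul_left_cancel₀ (pow_ne_zero a PowerSeries.X_ne_zero) hz'
    refine ⟨uinv * z, ?_⟩
    calc V i - lam * U' i = (uinv * u) * (V i - lam * U' i) := by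
          rw [mul_comm uinv u, hui, one_mul]
      _ = uinv * ((PowerSeries.X : PowerSeries k)^(m+1-a) * z) := by rw [mul_assoc, hcan]
      _ = _ := by ring
  choose E hE using key
  obtain ⟨lam', hlam'⟩ := hlamd
  refine ⟨U', fun s hs => ⟨(PowerSeries.X : PowerSeries k)^a, lam + PowerSeries.C s,
    fun i => U' i + PowerSeries.C s⁻¹ * ((PowerSeries.X : PowerSeries k)^(m+1-a) * E i),
    fun i l hl => ⟨?_, ?_⟩⟩⟩
  · have e : (PowerSeries.X : PowerSeries k)^a *
        (U' i + PowerSeries.C s⁻¹ * ((PowerSeries.X : PowerSeries k)^(m+1-a) * E i))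
        = U i + PowerSeries.C s⁻¹ * ((PowerSeries.X : PowerSeries k)^(m+1) * E i) := by
      have hpow : (PowerSeries.X : PowerSeries k)^a * (PowerSeries.X : PowerSeries k)^(m+1-a)
          = (PowerSeries.X : PowerSeries k)^(m+1) := by rw [← pow_add]; congr 1; omega
      rw [mul_add, ← hU' i, ← hpow]
      ring_nf
    rw [e, map_add, PowerSeries.coeff_C_mul,
      PowerSeries.X_pow_dvd_iff.mp (dvd_mul_right _ (E i)) l (by omega), mul_zero, add_zero]
  · have hcs : PowerSeries.C s * PowerSeries.C s⁻¹ = 1 := by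
      rw [← map_mul, mul_inv_cancel₀ hs, map_one]
    have e2 : (lam + PowerSeries.C s) *
        (U' i + PowerSeries.C s⁻¹ * ((PowerSeries.X : PowerSeries k)^(m+1-a) * E i))
        = V i + PowerSeries.C s * U' i
          + PowerSeries.C s⁻¹ * ((PowerSeries.X : PowerSeries k)^(m+1) * (lam' * E i)) := by
      have hpow : (PowerSeries.X : PowerSeries k)^(m+1)
          = (PowerSeries.X : PowerSeries k)^a * (PowerSeries.X : PowerSeries k)^(m+1-a) := by
        rw [← pow_add]; congr 1; omega
      rw [hpow]
      linear_combination ((PowerSeries.X : PowerSeries k)^(m+1-a) * E i) * hcs - hE i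
        + (PowerSeries.C s⁻¹ * (PowerSeries.X : PowerSeries k)^(m+1-a) * E i) * hlam'
    rw [e2, map_add, map_add, PowerSeries.coeff_C_mul, PowerSeries.coeff_C_mul,
      PowerSeries.X_pow_dvd_iff.mp (dvd_mul_right _ (lam' * E i)) l (by omega), mul_zero, add_zero]


open MvPolynomial PowerSeries

variable {k : Type*} [Field k] {N : Type*}

lemma affine_vanish [Infinite k] (p d : N → k) (f : MvPolynomial N k)
    (h : ∀ s : k, s ≠ 0 → MvPolynomial.eval (fun x => p x + s * d x) f = 0) :
    MvPolynomial.eval p f = 0 := by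
  set F : Polynomial k := MvPolynomial.eval₂ (Polynomial.C)
    (fun x => Polynomial.C (p x) + Polynomial.C (d x) * Polynomial.X) f with hF
  have hFs : ∀ s : k, Polynomial.eval s F = MvPolynomial.eval (fun x => p x + s * d x) f := by
    intro s
    rw [hF]
    have hcomp := MvPolynomial.eval₂_comp_left (Polynomial.evalRingHom s) (Polynomial.C)
      (fun x => Polynomial.C (p x) + Polynomial.C (d x) * Polynomial.X) f
    have h1 : (Polynomial.evalRingHom s).comp (Polynomial.C) = RingHom.id k := by
      ext a; simp
    rw [h1] at hcomp
    have h2 : (⇑(Polynomial.evalRingHom s) ∘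
        (fun x => Polynomial.C (p x) + Polynomial.C (d x) * Polynomial.X) : N → k)
        = fun x => p x + s * d x := by
      funext x
      simp only [Function.comp_apply, Polynomial.coe_evalRingHom, Polynomial.eval_add,
        Polynomial.eval_mul, Polynomial.eval_C, Polynomial.eval_X]
      ring
    rw [h2] at hcomp
    rw [show Polynomial.eval s (MvPolynomial.eval₂ Polynomial.C
      (fun x => Polynomial.C (p x) + Polynomial.C (d x) * Polynomial.X) f)
      = (Polynomial.evalRingHom s) (MvPolynomial.eval₂ Polynomial.C
      (fun x => Polynomial.C (p x) + Polynomial.C (d x) * Polynomial.X) f) from rfl,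
      hcomp, MvPolynomial.eval₂_id]
  have hFz : F = 0 := by
    apply Polynomial.eq_zero_of_infinite_isRoot
    apply Set.Infinite.mono (s := ({(0:k)}ᶜ : Set k))
    · intro s hs
      have : s ≠ 0 := hs
      simp only [Set.mem_setOf_eq, Polynomial.IsRoot]
      rw [hFs s]
      exact h s this
    · exact (Set.finite_singleton (0:k)).infinite_compl
  have h0 := hFs 0
  rw [hFz] at h0
  simp only [Polynomial.eval_zero] at h0
  have : (fun x => p x + (0:k) * d x) = p := by funext x; simp
  rw [this] at h0
  exact h0.symm


lemma limit [Infinite k] (m : ℕ) (p : (Fin 2 × Fin n) × Fin (m+1) → k)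
    (hp : p ∈ MvPolynomial.zeroLocus k (jetIdeal k (Fin 2 × Fin n) m (segreMinors k n)))
    (f : MvPolynomial ((Fin 2 × Fin n) × Fin (m+1)) k)
    (hf : ∀ A B : PowerSeries k, ∀ w : Fin n → PowerSeries k,
        MvPolynomial.eval (jpt m (fun i => A * w i) (fun i => B * w i)) f = 0) :
    MvPolynomial.eval p f = 0 := by
  set U : Fin n → PowerSeries k := fun i => psOf m p ((0:Fin 2), i) with hUdef
  set V : Fin n → PowerSeries k := fun i => psOf m p ((1:Fin 2), i) with hVdef
  have hpUV : jpt m U V = p := jpt_psOf m p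
  have hm' : ∀ i j, (PowerSeries.X : PowerSeries k)^(m+1) ∣ U i * V j - U j * V i := by
    intro i j
    rw [PowerSeries.X_pow_dvd_iff]
    intro l hl
    rw [map_sub, sub_eq_zero]
    have := (mem_zl_iff m p).mp hp i j l (by omega)
    rw [map_sub, sub_eq_zero] at this
    exact this
  by_cases hU0 : ∀ i, U i = 0
  · have hpe : p = jpt m (fun i => (0:PowerSeries k) * V i) (fun i => 1 * V i) := by
      rw [← hpUV]
      funext x
      simp only [jpt]
      split <;> simp [hU0 _]
    rw [hpe]
    exact hf 0 1 V
  by_cases hV0 : ∀ i, V i = 0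
  · have hpe : p = jpt m (fun i => (1:PowerSeries k) * U i) (fun i => 0 * U i) := by
      rw [← hpUV]
      funext x
      simp only [jpt]
      split <;> simp [hV0 _]
    rw [hpe]
    exact hf 1 0 U
  push_neg at hU0 hV0
  -- orders
  have hSU : {l : ℕ | ∃ i, PowerSeries.coeff l (U i) ≠ 0}.Nonempty := by
    obtain ⟨i, hi⟩ := hU0
    have : ∃ l, PowerSeries.coeff l (U i) ≠ 0 := by
      by_contra hcon
      push_neg at hcon
      exact hi (PowerSeries.ext fun l => by rw [hcon l, map_zero])
    obtain ⟨l, hl⟩ := this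
    exact ⟨l, i, hl⟩
  have hSV : {l : ℕ | ∃ i, PowerSeries.coeff l (V i) ≠ 0}.Nonempty := by
    obtain ⟨i, hi⟩ := hV0
    have : ∃ l, PowerSeries.coeff l (V i) ≠ 0 := by
      by_contra hcon
      push_neg at hcon
      exact hi (PowerSeries.ext fun l => by rw [hcon l, map_zero])
    obtain ⟨l, hl⟩ := this
    exact ⟨l, i, hl⟩
  set a := sInf {l : ℕ | ∃ i, PowerSeries.coeff l (U i) ≠ 0} with hadef
  set b := sInf {l : ℕ | ∃ i, PowerSeries.coeff l (V i) ≠ 0} with hbdef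
  have haU : ∃ i, PowerSeries.coeff a (U i) ≠ 0 := Nat.sInf_mem hSU
  have hbV : ∃ i, PowerSeries.coeff b (V i) ≠ 0 := Nat.sInf_mem hSV
  have hUlow : ∀ i, ∀ l < a, PowerSeries.coeff l (U i) = 0 := by
    intro i l hl
    by_contra hcon
    have hmem : l ∈ {l : ℕ | ∃ i, PowerSeries.coeff l (U i) ≠ 0} := ⟨i, hcon⟩
    exact absurd (Nat.sInf_le hmem) (by omega)
  have hVlow : ∀ i, ∀ l < b, PowerSeries.coeff l (V i) = 0 := by
    intro i l hl
    by_contra hcon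
    have hmem : l ∈ {l : ℕ | ∃ i, PowerSeries.coeff l (V i) ≠ 0} := ⟨i, hcon⟩
    exact absurd (Nat.sInf_le hmem) (by omega)
  have hcoefftop : ∀ (w : Fin n → PowerSeries k) (r : Fin 2), (∀ i, w i = psOf m p (r, i)) →
      ∀ l, m < l → ∀ i, PowerSeries.coeff l (w i) = 0 := by
    intro w r hw l hml i
    rw [hw i, psOf, coeff_tser, dif_neg (by omega)]
  have ham : a ≤ m := by
    obtain ⟨l, i, hl⟩ := hSU
    have hlm : l ≤ m := by
      by_contra hcon
      exact hl (hcoefftop U 0 (fun _ => rfl) l (by omega) i)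
    exact le_trans (Nat.sInf_le ⟨i, hl⟩) hlm
  have hbm : b ≤ m := by
    obtain ⟨l, i, hl⟩ := hSV
    have hlm : l ≤ m := by
      by_contra hcon
      exact hl (hcoefftop V 1 (fun _ => rfl) l (by omega) i)
    exact le_trans (Nat.sInf_le ⟨i, hl⟩) hlm
  rcases le_or_gt a b with hab | hba
  · obtain ⟨D, hD⟩ := core2 U V hm' a ham haU hUlow (fun i l hl => hVlow i l (lt_of_lt_of_le hl hab))
    apply affine_vanish p
      (fun x => if x.1.1 = 0 then 0 else PowerSeries.coeff (x.2 : ℕ) (D x.1.2)) f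
    intro s hs
    obtain ⟨A, B, w, hABw⟩ := hD s hs
    have hpe : (fun x => p x + s * (if x.1.1 = 0 then 0
        else PowerSeries.coeff (x.2 : ℕ) (D x.1.2)))
        = jpt m (fun i => A * w i) (fun i => B * w i) := by
      funext x
      have hlm : (x.2 : ℕ) ≤ m := Nat.lt_succ_iff.mp x.2.isLt
      rw [← hpUV]
      simp only [jpt]
      by_cases hr : x.1.1 = 0
      · rw [if_pos hr, if_pos hr, if_pos hr, (hABw x.1.2 x.2 hlm).1]
        ring
      · rw [if_neg hr, if_neg hr, if_neg hr, (hABw x.1.2 x.2 hlm).2]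
    rw [hpe]
    exact hf A B w
  · have hm'' : ∀ i j, (PowerSeries.X : PowerSeries k)^(m+1) ∣ V i * U j - V j * U i := by
      intro i j
      have := (hm' j i).neg_right
      rw [neg_sub] at this
      have he : U i * V j - U j * V i = V j * U i - V i * U j := by ring
      have := (hm' i j).neg_right
      rw [neg_sub] at this
      have he2 : U j * V i - U i * V j = V i * U j - V j * U i := by ring
      rwa [he2] at this
    obtain ⟨D, hD⟩ := core2 V U hm'' b hbm hbV hVlow (fun i l hl => hUlow i l (lt_trans hl hba))
    apply affine_vanish p
      (fun x => if x.1.1 = 0 then PowerSeries.coeff (x.2 : ℕ) (D x.1.2) else 0) f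
    intro s hs
    obtain ⟨A, B, w, hABw⟩ := hD s hs
    have hpe : (fun x => p x + s * (if x.1.1 = 0
        then PowerSeries.coeff (x.2 : ℕ) (D x.1.2) else 0))
        = jpt m (fun i => B * w i) (fun i => A * w i) := by
      funext x
      have hlm : (x.2 : ℕ) ≤ m := Nat.lt_succ_iff.mp x.2.isLt
      rw [← hpUV]
      simp only [jpt]
      by_cases hr : x.1.1 = 0
      · rw [if_pos hr, if_pos hr, if_pos hr, (hABw x.1.2 x.2 hlm).2]
      · rw [if_neg hr, if_neg hr, if_neg hr, (hABw x.1.2 x.2 hlm).1]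
        ring
    rw [hpe]
    exact hf B A w

section Generic
variable {k : Type*} [Field k] {n : ℕ}

lemma aeval_eval {σ : Type*} (q : σ → k) (y : MvPolynomial σ k) :
    MvPolynomial.aeval q y = MvPolynomial.eval q y := by
  rw [MvPolynomial.aeval_def, Algebra.algebraMap_self, MvPolynomial.eval₂_id]

/-- the generic rank-one jet point with polynomial coefficients -/
def genPt (k : Type*) [Field k] (n m : ℕ) :
    (Fin 2 × Fin n) × Fin (m+1) → MvPolynomial ((Fin 2 ⊕ Fin n) × Fin (m+1)) k :=
  fun x => PowerSeries.coeff (x.2 : ℕ)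
    ((if x.1.1 = 0 then tser m (fun l => MvPolynomial.X (Sum.inl 0, l))
       else tser m (fun l => MvPolynomial.X (Sum.inl 1, l)))
      * tser m (fun l => MvPolynomial.X (Sum.inr x.1.2, l)))

/-- specialization of the generic point -/
lemma eval_genPt (m : ℕ) (q : (Fin 2 ⊕ Fin n) × Fin (m+1) → k) :
    (fun x => MvPolynomial.eval q (genPt k n m x))
      = jpt m (fun i => tser m (fun l => q (Sum.inl 0, l)) * tser m (fun l => q (Sum.inr i, l)))
              (fun i => tser m (fun l => q (Sum.inl 1, l)) * tser m (fun l => q (Sum.inr i, l))) := by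
  funext x
  unfold genPt jpt
  rw [show MvPolynomial.eval q (PowerSeries.coeff (x.2 : ℕ)
      ((if x.1.1 = 0 then tser m (fun l => MvPolynomial.X (Sum.inl 0, l))
        else tser m (fun l => MvPolynomial.X (Sum.inl 1, l)))
       * tser m (fun l => MvPolynomial.X (Sum.inr x.1.2, l))))
    = PowerSeries.coeff (x.2 : ℕ) (PowerSeries.map (MvPolynomial.eval q)
      ((if x.1.1 = 0 then tser m (fun l => MvPolynomial.X (Sum.inl 0, l))
        else tser m (fun l => MvPolynomial.X (Sum.inl 1, l)))
       * tser m (fun l => MvPolynomial.X (Sum.inr x.1.2, l)))) from (PowerSeries.coeff_map _ _ _).symm]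
  rw [map_mul, apply_ite (PowerSeries.map (MvPolynomial.eval q)), map_tser, map_tser, map_tser]
  simp only [MvPolynomial.eval_X]
  split <;> rfl

lemma eval_aeval_genPt (m : ℕ) (q : (Fin 2 ⊕ Fin n) × Fin (m+1) → k)
    (f : MvPolynomial ((Fin 2 × Fin n) × Fin (m+1)) k) :
    MvPolynomial.eval q (MvPolynomial.aeval (genPt k n m) f)
      = MvPolynomial.eval (fun x => MvPolynomial.eval q (genPt k n m x)) f := by
  have hcomp : ((MvPolynomial.aeval q).comp (MvPolynomial.aeval (genPt k n m))
      : MvPolynomial ((Fin 2 × Fin n) × Fin (m+1)) k →ₐ[k] k)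
      = MvPolynomial.aeval (fun x => MvPolynomial.eval q (genPt k n m x)) := by
    apply MvPolynomial.algHom_ext
    intro x
    simp only [AlgHom.comp_apply, MvPolynomial.aeval_X]
    exact aeval_eval q _
  have := congrArg (fun F => F f) hcomp
  simp only [AlgHom.comp_apply] at this
  rw [aeval_eval, aeval_eval] at this
  exact this

theorem part1 (k : Type*) [Field k] [IsAlgClosed k] (n m : ℕ) :
    (jetIdeal k (Fin 2 × Fin n) m (segreMinors k n)).radical.IsPrime := by
  rw [← MvPolynomial.vanishingIdeal_zeroLocus_eq_radical (K := k)]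
  constructor
  · intro htop
    have h0 : jpt m (fun i => (0 : PowerSeries k) * (fun _ => (0 : PowerSeries k)) i)
        (fun i => (0 : PowerSeries k) * (fun _ => (0 : PowerSeries k)) i)
        ∈ MvPolynomial.zeroLocus k (jetIdeal k (Fin 2 × Fin n) m (segreMinors k n)) :=
      wpt_mem_zl m 0 0 (fun _ => 0)
    have h1 : (1 : MvPolynomial ((Fin 2 × Fin n) × Fin (m+1)) k)
        ∈ MvPolynomial.vanishingIdeal k
          (MvPolynomial.zeroLocus k (jetIdeal k (Fin 2 × Fin n) m (segreMinors k n))) := by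
      rw [htop]; exact Submodule.mem_top
    have := MvPolynomial.mem_vanishingIdeal_iff.mp h1 _ h0
    simp at this
  · intro f g hfg
    set F := MvPolynomial.aeval (genPt k n m) f with hFdef
    set G := MvPolynomial.aeval (genPt k n m) g with hGdef
    have hFG : F * G = 0 := by
      apply MvPolynomial.funext
      intro q
      rw [map_mul, map_zero, hFdef, hGdef, eval_aeval_genPt, eval_aeval_genPt, eval_genPt]
      have hmem := wpt_mem_zl (n := n) m (tser m (fun l => q (Sum.inl 0, l)))
        (tser m (fun l => q (Sum.inl 1, l))) (fun i => tser m (fun l => q (Sum.inr i, l)))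
      have hz := MvPolynomial.mem_vanishingIdeal_iff.mp hfg _ hmem
      rw [map_mul] at hz
      exact hz
    -- from F*G = 0 in a domain, one factor vanishes identically on rank-one jets
    have main : ∀ h : MvPolynomial ((Fin 2 × Fin n) × Fin (m+1)) k,
        MvPolynomial.aeval (genPt k n m) h = 0 →
        h ∈ MvPolynomial.vanishingIdeal k
          (MvPolynomial.zeroLocus k (jetIdeal k (Fin 2 × Fin n) m (segreMinors k n))) := by
      intro h hh
      rw [MvPolynomial.mem_vanishingIdeal_iff]
      intro p hp
      apply limit m p hp h
      intro A B w
      set q : (Fin 2 ⊕ Fin n) × Fin (m+1) → k := fun z =>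
        Sum.elim (fun r => PowerSeries.coeff (z.2 : ℕ) (if r = 0 then A else B))
          (fun i => PowerSeries.coeff (z.2 : ℕ) (w i)) z.1 with hqdef
      have htrA : (PowerSeries.X : PowerSeries k)^(m+1)
          ∣ tser m (fun l => q (Sum.inl 0, l)) - A := by
        rw [PowerSeries.X_pow_dvd_iff]
        intro l hl
        rw [map_sub, sub_eq_zero, coeff_tser, dif_pos hl]
        simp [hqdef]
      have htrB : (PowerSeries.X : PowerSeries k)^(m+1)
          ∣ tser m (fun l => q (Sum.inl 1, l)) - B := by
        rw [PowerSeries.X_pow_dvd_iff]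
        intro l hl
        rw [map_sub, sub_eq_zero, coeff_tser, dif_pos hl]
        simp [hqdef]
      have htrW : ∀ i, (PowerSeries.X : PowerSeries k)^(m+1)
          ∣ tser m (fun l => q (Sum.inr i, l)) - w i := by
        intro i
        rw [PowerSeries.X_pow_dvd_iff]
        intro l hl
        rw [map_sub, sub_eq_zero, coeff_tser, dif_pos hl]
        simp [hqdef]
      have hpt : jpt m (fun i => A * w i) (fun i => B * w i)
          = jpt (n := n) m
            (fun i => tser m (fun l => q (Sum.inl 0, l)) * tser m (fun l => q (Sum.inr i, l)))
            (fun i => tser m (fun l => q (Sum.inl 1, l)) * tser m (fun l => q (Sum.inr i, l))) := by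
        funext x
        have hlm : (x.2 : ℕ) ≤ m := Nat.lt_succ_iff.mp x.2.isLt
        unfold jpt
        by_cases hr : x.1.1 = 0
        · rw [if_pos hr, if_pos hr]
          exact (coeff_eq_of_dvd (mul_congr htrA (htrW x.1.2)) hlm).symm
        · rw [if_neg hr, if_neg hr]
          exact (coeff_eq_of_dvd (mul_congr htrB (htrW x.1.2)) hlm).symm
      rw [hpt, ← eval_genPt, ← eval_aeval_genPt, hh, map_zero]
    rcases mul_eq_zero.mp hFG with hF | hG
    · exact Or.inl (main f hF)
    · exact Or.inr (main g hG)
end Generic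


open MvPolynomial

variable {k : Type*} [Field k] {n : ℕ}

/-- total degree of an exponent -/
def deg (e : (Fin 2 × Fin n) →₀ ℕ) : ℕ := e.sum fun _ m => m

lemma deg_add (e1 e2 : (Fin 2 × Fin n) →₀ ℕ) : deg (e1 + e2) = deg e1 + deg e2 :=
  Finsupp.sum_add_index' (fun _ => rfl) (fun _ _ _ => rfl)

lemma deg_eq_zero_iff (e : (Fin 2 × Fin n) →₀ ℕ) : deg e = 0 ↔ e = 0 := by
  constructor
  · intro h
    ext a
    by_contra hcon
    have hmem : a ∈ e.support := Finsupp.mem_support_iff.mpr (by simpa using hcon)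
    have := Finset.sum_eq_zero_iff.mp h a hmem
    simp at this
    exact hcon (by simp [this])
  · intro h; rw [h]; rfl

lemma deg_single (v : Fin 2 × Fin n) : deg (Finsupp.single v 1) = 1 := by
  rw [deg, Finsupp.sum_single_index rfl]

lemma X_mul_X (a b : Fin 2 × Fin n) :
    (MvPolynomial.X a * MvPolynomial.X b : MvPolynomial (Fin 2 × Fin n) k)
      = MvPolynomial.monomial (Finsupp.single a 1 + Finsupp.single b 1) 1 := by
  rw [MvPolynomial.X, MvPolynomial.X, MvPolynomial.monomial_mul, one_mul]

/-- every element of the ideal of minors has vanishing coefficients in degrees ≤ 1 -/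
lemma low_vanish (q : MvPolynomial (Fin 2 × Fin n) k) (hq : q ∈ Ideal.span (segreMinors k n)) :
    ∀ e, deg e ≤ 1 → MvPolynomial.coeff e q = 0 := by
  induction hq using Submodule.span_induction with
  | mem x hx =>
    obtain ⟨i, j, rfl⟩ := hx
    intro e he
    rw [coeff_sub, X_mul_X, X_mul_X, MvPolynomial.coeff_monomial, MvPolynomial.coeff_monomial]
    rw [if_neg, if_neg, sub_zero]
    · intro hcon
      rw [← hcon, deg_add, deg_single, deg_single] at he
      omega
    · intro hcon
      rw [← hcon, deg_add, deg_single, deg_single] at he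
      omega
  | zero => intro e _; simp
  | add x y _ _ hx hy => intro e he; rw [coeff_add, hx e he, hy e he, add_zero]
  | smul a x _ hx =>
    intro e he
    rw [smul_eq_mul, MvPolynomial.coeff_mul]
    apply Finset.sum_eq_zero
    intro p hp
    have hsum := Finset.HasAntidiagonal.mem_antidiagonal.mp hp
    have : deg p.2 ≤ 1 := by
      have := deg_add p.1 p.2
      rw [hsum] at this
      omega
    rw [hx p.2 this, mul_zero]

lemma coeff_mul_low (c q : MvPolynomial (Fin 2 × Fin n) k)
    (hq : ∀ e', deg e' ≤ 1 → MvPolynomial.coeff e' q = 0)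
    (e : (Fin 2 × Fin n) →₀ ℕ) (hdeg : deg e = 2) :
    MvPolynomial.coeff e (c * q) = MvPolynomial.coeff 0 c * MvPolynomial.coeff e q := by
  rw [MvPolynomial.coeff_mul]
  apply Finset.sum_eq_single (0, e)
  · intro p hp hne
    have hsum := Finset.HasAntidiagonal.mem_antidiagonal.mp hp
    have h1 : p.1 ≠ 0 := by
      intro hcon
      apply hne
      have : p.2 = e := by rw [← hsum, hcon, zero_add]
      exact Prod.ext hcon this
    have hd1 : 1 ≤ deg p.1 := by
      rcases Nat.eq_zero_or_pos (deg p.1) with h | h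
      · exact absurd ((deg_eq_zero_iff p.1).mp h) h1
      · omega
    have : deg p.2 ≤ 1 := by
      have := deg_add p.1 p.2
      rw [hsum] at this
      omega
    rw [hq p.2 this, mul_zero]
  · intro hcon
    exact absurd (Finset.HasAntidiagonal.mem_antidiagonal.mpr (zero_add e)) hcon

lemma pairfin_eq_iff (i j i' j' : Fin n) :
    (Finsupp.single ((0:Fin 2), i) 1 + Finsupp.single ((1:Fin 2), j) 1 : (Fin 2 × Fin n) →₀ ℕ)
      = Finsupp.single ((0:Fin 2), i') 1 + Finsupp.single ((1:Fin 2), j') 1 ↔ i = i' ∧ j = j' := by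
  constructor
  · intro h
    constructor
    · by_contra hcon
      have h1 := DFunLike.congr_fun h ((0:Fin 2), i')
      simp [Finsupp.single_apply, Prod.ext_iff, hcon] at h1
    · by_contra hcon
      have h1 := DFunLike.congr_fun h ((1:Fin 2), j')
      simp [Finsupp.single_apply, Prod.ext_iff, hcon] at h1
  · rintro ⟨rfl, rfl⟩; rfl

lemma coeff_E_minor (i j i' j' : Fin n) (hij : i < j) (hij' : i' < j') :
    MvPolynomial.coeff
      (Finsupp.single ((0:Fin 2), i) 1 + Finsupp.single ((1:Fin 2), j) 1)
      (MvPolynomial.X ((0:Fin 2), i') * MvPolynomial.X ((1:Fin 2), j') - MvPolynomial.X ((0:Fin 2), j') * MvPolynomial.X ((1:Fin 2), i')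
        : MvPolynomial (Fin 2 × Fin n) k)
    = if i' = i ∧ j' = j then 1 else 0 := by
  rw [coeff_sub, X_mul_X, X_mul_X, MvPolynomial.coeff_monomial, MvPolynomial.coeff_monomial]
  have hcross : ¬ (Finsupp.single ((0:Fin 2), j') 1 + Finsupp.single ((1:Fin 2), i') 1
      = Finsupp.single ((0:Fin 2), i) 1 + Finsupp.single ((1:Fin 2), j) 1) := by
    intro hcon
    obtain ⟨h1, h2⟩ := (pairfin_eq_iff j' i' i j).mp hcon
    rw [h1, h2] at hij'
    exact absurd hij' (not_lt.mpr hij.le)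
  rw [if_neg hcross, sub_zero]
  by_cases h : i' = i ∧ j' = j
  · rw [if_pos ((pairfin_eq_iff i' j' i j).mpr h), if_pos h]
  · rw [if_neg (fun hcon => h ((pairfin_eq_iff i' j' i j).mp hcon)), if_neg h]
theorem part2 (k : Type*) [Field k] (n : ℕ) (hn : 3 ≤ n) :
    ¬ ∃ g : Fin (2 * n - (n + 1)) → MvPolynomial (Fin 2 × Fin n) k,
        Ideal.span (Set.range g) = Ideal.span (segreMinors k n) := by
  rintro ⟨g, hg⟩
  classical
  set pr : Fin n → Fin n × Fin n := fun t =>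
    if (t:ℕ) = 0 then (⟨0, by omega⟩, ⟨1, by omega⟩)
    else if (t:ℕ) = 1 then (⟨0, by omega⟩, ⟨2, by omega⟩)
    else if (t:ℕ) = 2 then (⟨1, by omega⟩, ⟨2, by omega⟩)
    else (⟨0, by omega⟩, t) with hpr
  have prlt : ∀ t, (pr t).1 < (pr t).2 := by
    intro t
    simp only [hpr]
    split_ifs with h1 h2 h3 <;> simp [Fin.lt_def] <;> omega
  have prinj : Function.Injective pr := by
    intro t t' h
    simp only [hpr] at h
    apply Fin.ext
    split_ifs at h <;> simp_all [Prod.ext_iff, Fin.ext_iff] <;> omega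
  set E : Fin n → ((Fin 2 × Fin n) →₀ ℕ) := fun t =>
    Finsupp.single ((0:Fin 2), (pr t).1) 1 + Finsupp.single ((1:Fin 2), (pr t).2) 1 with hE
  set Θ : MvPolynomial (Fin 2 × Fin n) k → (Fin n → k) :=
    fun p t => MvPolynomial.coeff (E t) p with hΘ
  set μ : Fin n → MvPolynomial (Fin 2 × Fin n) k := fun t =>
    MvPolynomial.X ((0:Fin 2), (pr t).1) * MvPolynomial.X ((1:Fin 2), (pr t).2)
      - MvPolynomial.X ((0:Fin 2), (pr t).2) * MvPolynomial.X ((1:Fin 2), (pr t).1) with hμ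
  have hdegE : ∀ t, deg (E t) = 2 := by
    intro t
    rw [hE, deg_add, deg_single, deg_single]
  have hμδ : ∀ t t', Θ (μ t') t = if t' = t then 1 else 0 := by
    intro t t'
    rw [hΘ, hμ, hE]
    simp only
    rw [coeff_E_minor _ _ _ _ (prlt t) (prlt t')]
    by_cases h : t' = t
    · rw [if_pos h, if_pos (by rw [h]; exact ⟨rfl, rfl⟩)]
    · rw [if_neg h, if_neg]
      intro hcon
      exact h (prinj (Prod.ext hcon.1 hcon.2))
  have hglow : ∀ r, ∀ e, deg e ≤ 1 → MvPolynomial.coeff e (g r) = 0 := by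
    intro r
    apply low_vanish
    rw [← hg]
    exact Ideal.subset_span ⟨r, rfl⟩
  have key : ∀ t, Θ (μ t) ∈ Submodule.span k (Set.range fun r => Θ (g r)) := by
    intro t
    have hmem : μ t ∈ Ideal.span (Set.range g) := by
      rw [hg, hμ]
      exact Ideal.subset_span ⟨(pr t).1, (pr t).2, rfl⟩
    obtain ⟨c, hc⟩ := Ideal.mem_span_range_iff_exists_fun.mp hmem
    rw [Submodule.mem_span_range_iff_exists_fun]
    refine ⟨fun r => MvPolynomial.coeff 0 (c r), ?_⟩
    funext t'
    rw [← hc]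
    simp only [Finset.sum_apply, Pi.smul_apply, smul_eq_mul]
    rw [hΘ]
    simp only
    rw [MvPolynomial.coeff_sum]
    refine Finset.sum_congr rfl fun r _ => ?_
    rw [coeff_mul_low (c r) (g r) (hglow r) (E t') (hdegE t')]
  have hspan : Submodule.span k (Set.range fun r => Θ (g r)) = ⊤ := by
    rw [eq_top_iff, ← (Pi.basisFun k (Fin n)).span_eq, Submodule.span_le]
    rintro _ ⟨t, rfl⟩
    rw [Pi.basisFun_apply]
    have hsingle : (Pi.single t 1 : Fin n → k) = Θ (μ t) := by
      funext t'
      rw [hμδ t' t]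
      by_cases h : t' = t
      · rw [h, if_pos rfl, Pi.single_eq_same]
      · rw [if_neg (fun hc => h hc.symm), Pi.single_eq_of_ne h]
    rw [SetLike.mem_coe, hsingle]
    exact key t
  have hle := finrank_le_of_span_eq_top hspan
  rw [Module.finrank_pi] at hle
  simp only [Fintype.card_fin] at hle
  omega


end S13

/- STATEMENT 13: For `n ≥ 3`, the cone `X ⊂ 𝔸^{2n}` over the Segre embedding of
`ℙ¹ × ℙ^{n−1}` (the rank ≤ 1 locus of `2 × n` matrices, of dimension `n+1`) has irreducible
jet schemes `X_m` for every `m ≥ 1`, even though `X` is not a complete intersection: its ideal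
cannot be generated by `2n − (n+1) = n − 1` elements. -/
theorem stmt13 (k : Type*) [Field k] [IsAlgClosed k] (n : ℕ) (hn : 3 ≤ n) :
    (∀ m : ℕ, 1 ≤ m →
      (jetIdeal k (Fin 2 × Fin n) m (segreMinors k n)).radical.IsPrime) ∧
    ¬ ∃ g : Fin (2 * n - (n + 1)) → MvPolynomial (Fin 2 × Fin n) k,
        Ideal.span (Set.range g) = Ideal.span (segreMinors k n) := by
  exact ⟨fun m _ => S13.part1 k n m, S13.part2 k n hn⟩
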